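/- Define λ(p) := (p−1)·(π/(p·sin(π/p)))^p for p > 1. Then for every p > 1, λ(p) > p + π²/6 − 1 − π²/(6(p+1)). -/

import Mathlib

open Real

lemma aux_nonneg {f f' : ℝ → ℝ} (hder : ∀ y, HasDerivAt f (f' y) y) (h0 : f 0 = 0)
    (h : ∀ y, 0 ≤ y → 0 ≤ f' y) {x : ℝ} (hx : 0 ≤ x) : 0 ≤ f x := by
  have m : MonotoneOn f (Set.Ici (0:ℝ)) := by
    apply monotoneOn_of_deriv_nonneg (convex_Ici 0)
      (fun y _ => (hder y).continuousAt.continuousWithinAt)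
      (fun y _ => (hder y).differentiableAt.differentiableWithinAt)
    intro y hy
    rw [(hder y).deriv]
    exact h y (le_of_lt (by simpa using hy))
  calc (0:ℝ) = f 0 := h0.symm
  _ ≤ f x := m (by simp) (by simpa using hx) hx

lemma step3 {x : ℝ} (hx : 0 ≤ x) : x - x^3/6 ≤ Real.sin x := by
  have := aux_nonneg (f := fun x => Real.sin x - (x - x^3/6))
    (f' := fun y => Real.cos y - (1 - y^2/2)) ?_ (by norm_num) ?_ hx
  · linarith [this]
  · intro y
    have := (Real.hasDerivAt_sin y).sub ((hasDerivAt_id y).sub ((hasDerivAt_pow 3 y).div_const 6))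
    refine this.congr_deriv ?_
    push_cast; ring
  · intro y _
    nlinarith [Real.one_sub_sq_div_two_le_cos (x := y)]

lemma step4 {x : ℝ} (hx : 0 ≤ x) : Real.cos x ≤ 1 - x^2/2 + x^4/24 := by
  have := aux_nonneg (f := fun x => 1 - x^2/2 + x^4/24 - Real.cos x)
    (f' := fun y => Real.sin y - (y - y^3/6)) ?_ (by norm_num) ?_ hx
  · linarith [this]
  · intro y
    have := ((((hasDerivAt_const y (1:ℝ)).sub ((hasDerivAt_pow 2 y).div_const 2)).add
      ((hasDerivAt_pow 4 y).div_const 24)).sub (Real.hasDerivAt_cos y))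
    refine this.congr_deriv ?_
    push_cast; ring
  · intro y hy
    linarith [step3 hy]

lemma step5 {x : ℝ} (hx : 0 ≤ x) : Real.sin x ≤ x - x^3/6 + x^5/120 := by
  have := aux_nonneg (f := fun x => x - x^3/6 + x^5/120 - Real.sin x)
    (f' := fun y => 1 - y^2/2 + y^4/24 - Real.cos y) ?_ (by norm_num) ?_ hx
  · linarith [this]
  · intro y
    have := (((hasDerivAt_id y).sub ((hasDerivAt_pow 3 y).div_const 6)).add
      ((hasDerivAt_pow 5 y).div_const 120)).sub (Real.hasDerivAt_sin y)
    refine this.congr_deriv ?_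
    push_cast; ring
  · intro y hy
    linarith [step4 hy]

lemma step6 {x : ℝ} (hx : 0 ≤ x) : 1 - x^2/2 + x^4/24 - x^6/720 ≤ Real.cos x := by
  have := aux_nonneg (f := fun x => Real.cos x - (1 - x^2/2 + x^4/24 - x^6/720))
    (f' := fun y => (y - y^3/6 + y^5/120) - Real.sin y) ?_ (by norm_num) ?_ hx
  · linarith [this]
  · intro y
    have := (Real.hasDerivAt_cos y).sub ((((hasDerivAt_const y (1:ℝ)).sub
      ((hasDerivAt_pow 2 y).div_const 2)).add ((hasDerivAt_pow 4 y).div_const 24)).sub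
      ((hasDerivAt_pow 6 y).div_const 720))
    refine this.congr_deriv ?_
    push_cast; ring
  · intro y hy
    linarith [step5 hy]

lemma step7 {x : ℝ} (hx : 0 ≤ x) : x - x^3/6 + x^5/120 - x^7/5040 ≤ Real.sin x := by
  have := aux_nonneg (f := fun x => Real.sin x - (x - x^3/6 + x^5/120 - x^7/5040))
    (f' := fun y => Real.cos y - (1 - y^2/2 + y^4/24 - y^6/720)) ?_ (by norm_num) ?_ hx
  · linarith [this]
  · intro y
    have := (Real.hasDerivAt_sin y).sub ((((hasDerivAt_id y).sub
      ((hasDerivAt_pow 3 y).div_const 6)).add ((hasDerivAt_pow 5 y).div_const 120)).sub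
      ((hasDerivAt_pow 7 y).div_const 5040))
    refine this.congr_deriv ?_
    push_cast; ring
  · intro y hy
    linarith [step6 hy]

lemma step8 {x : ℝ} (hx : 0 ≤ x) : Real.cos x ≤ 1 - x^2/2 + x^4/24 - x^6/720 + x^8/40320 := by
  have := aux_nonneg (f := fun x => 1 - x^2/2 + x^4/24 - x^6/720 + x^8/40320 - Real.cos x)
    (f' := fun y => Real.sin y - (y - y^3/6 + y^5/120 - y^7/5040)) ?_ (by norm_num) ?_ hx
  · linarith [this]
  · intro y
    have := (((((hasDerivAt_const y (1:ℝ)).sub ((hasDerivAt_pow 2 y).div_const 2)).add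
      ((hasDerivAt_pow 4 y).div_const 24)).sub ((hasDerivAt_pow 6 y).div_const 720)).add
      ((hasDerivAt_pow 8 y).div_const 40320)).sub (Real.hasDerivAt_cos y)
    refine this.congr_deriv ?_
    push_cast; ring
  · intro y hy
    linarith [step7 hy]

lemma step9 {x : ℝ} (hx : 0 ≤ x) :
    Real.sin x ≤ x - x^3/6 + x^5/120 - x^7/5040 + x^9/362880 := by
  have := aux_nonneg (f := fun x => x - x^3/6 + x^5/120 - x^7/5040 + x^9/362880 - Real.sin x)
    (f' := fun y => 1 - y^2/2 + y^4/24 - y^6/720 + y^8/40320 - Real.cos y) ?_ (by norm_num) ?_ hx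
  · linarith [this]
  · intro y
    have := (((((hasDerivAt_id y).sub ((hasDerivAt_pow 3 y).div_const 6)).add
      ((hasDerivAt_pow 5 y).div_const 120)).sub ((hasDerivAt_pow 7 y).div_const 5040)).add
      ((hasDerivAt_pow 9 y).div_const 362880)).sub (Real.hasDerivAt_sin y)
    refine this.congr_deriv ?_
    push_cast; ring
  · intro y hy
    linarith [step8 hy]

lemma cubic_core {y t : ℝ} (hy0 : 0 ≤ y) (hy : y ≤ 25/4) (ht1 : 9.86 ≤ t) (ht2 : t ≤ 9.88) :
    0 ≤ (7*t/360 - 1/6) + (1/120 - t/840)*y + (11*t/362880 - 1/5040)*y^2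
        + ((6-t)/2177280)*y^3 := by
  nlinarith [mul_nonneg hy0 hy0, mul_nonneg (mul_nonneg hy0 hy0) hy0,
    mul_nonneg (sub_nonneg.2 hy) hy0, mul_nonneg (mul_nonneg (sub_nonneg.2 hy) hy0) hy0,
    mul_nonneg (sub_nonneg.2 ht1) hy0, mul_nonneg (sub_nonneg.2 ht2) hy0]

lemma small_case {x : ℝ} (hx0 : 0 < x) (hx : x ≤ 5/2) :
    π^2/6 * x^2 * (x - x^3/6 + x^5/120 - x^7/5040 + x^9/362880) ≤
      (x - (x - x^3/6 + x^5/120 - x^7/5040 + x^9/362880)) * (π^2 - x^2) := by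
  have hpi : (3.1415 : ℝ) < π := by linarith [Real.pi_gt_d6]
  have hpi2 : π < 3.1416 := by linarith [Real.pi_lt_d6]
  have ht1 : (9.86:ℝ) ≤ π^2 := by nlinarith
  have ht2 : π^2 ≤ 9.88 := by nlinarith
  have hy : x^2 ≤ 25/4 := by nlinarith
  have hg := cubic_core (sq_nonneg x) hy ht1 ht2
  have h5 : (0:ℝ) ≤ x^5 := (pow_pos hx0 5).le
  nlinarith [mul_nonneg h5 hg]

lemma keyA {x : ℝ} (hx0 : 0 < x) (hxpi : x < π) :
    π^2/6 * x^2 * Real.sin x ≤ (x - Real.sin x) * (π^2 - x^2) := by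
  have hpi : (3.1415 : ℝ) < π := by linarith [Real.pi_gt_d6]
  have hpi2 : π < 3.1416 := by linarith [Real.pi_lt_d6]
  have hsnn : 0 ≤ Real.sin x := Real.sin_nonneg_of_nonneg_of_le_pi hx0.le hxpi.le
  have hx2 : x^2 < π^2 := by nlinarith
  rcases le_or_gt x (5/2) with hc | hc
  · have hs9 := step9 hx0.le
    have h1 : π^2/6 * x^2 * Real.sin x ≤
        π^2/6 * x^2 * (x - x^3/6 + x^5/120 - x^7/5040 + x^9/362880) := by
      apply mul_le_mul_of_nonneg_left hs9
      positivity
    have h2 : (x - (x - x^3/6 + x^5/120 - x^7/5040 + x^9/362880)) * (π^2 - x^2) ≤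
        (x - Real.sin x) * (π^2 - x^2) := by
      apply mul_le_mul_of_nonneg_right _ (by linarith)
      linarith
    linarith [small_case hx0 hc]
  · have hs : Real.sin x ≤ π - x := by
      have := Real.sin_le (x := π - x) (by linarith)
      rwa [Real.sin_pi_sub] at this
    have h1 : π^2/6 * x^2 * Real.sin x ≤ π^2/6 * x^2 * (π - x) := by
      apply mul_le_mul_of_nonneg_left hs
      positivity
    have h2 : (2*x - π) * (π^2 - x^2) ≤ (x - Real.sin x) * (π^2 - x^2) := by
      apply mul_le_mul_of_nonneg_right _ (by linarith)
      linarith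
    have hq : π^2/6 * x^2 * (π - x) ≤ (2*x - π) * (π^2 - x^2) := by
      have ht2 : π^2 ≤ 9.88 := by nlinarith
      have hq0 : 0 ≤ (2 - π^2/6)*x^2 + π*x - π^2 := by
        nlinarith [mul_pos (by linarith : (0:ℝ) < x - 5/2) (by linarith : (0:ℝ) < x + 5/2),
          mul_nonneg (by linarith : (0:ℝ) ≤ π - 3.1415) (by linarith : (0:ℝ) ≤ x - 5/2),
          mul_nonneg (by linarith : (0:ℝ) ≤ 9.88 - π^2) (by linarith : (0:ℝ) ≤ x - 5/2)]
      nlinarith [mul_nonneg (by linarith : (0:ℝ) ≤ π - x) hq0]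
    linarith

theorem lambda_lower_bound (p : ℝ) (hp : 1 < p) :
    p + π ^ 2 / 6 - 1 - π ^ 2 / (6 * (p + 1)) <
      (p - 1) * (π / (p * Real.sin (π / p))) ^ p := by
  have hp0 : 0 < p := by linarith
  have hpi : 0 < π := Real.pi_pos
  have ht0 : 0 < π / p := by positivity
  have htpi : π / p < π := by
    rw [div_lt_iff₀ hp0]
    nlinarith
  have hs : 0 < Real.sin (π / p) := Real.sin_pos_of_pos_of_lt_pi ht0 htpi
  set s := Real.sin (π / p) with hsdef
  set a : ℝ := π^2 / (6 * (p^2 - 1)) with hadef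
  have hp21 : 0 < p^2 - 1 := by nlinarith
  have ha : 0 < a := by positivity
  have hfac : 0 < π^2 - (π/p)^2 := by
    have : (π/p)^2 < π^2 := by
      apply pow_lt_pow_left₀ htpi ht0.le
      norm_num
    linarith
  -- from keyA : (1 + a) * s ≤ π / p
  have key := keyA ht0 htpi
  have hne2 : p^2 - 1 ≠ 0 := ne_of_gt hp21
  have hpne : p ≠ 0 := ne_of_gt hp0
  have heq : a * s * (π^2 - (π/p)^2) = π^2/6 * (π/p)^2 * s := by
    rw [hadef]
    field_simp
  have h3 : a * s ≤ π/p - s := by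
    have h4 : a * s * (π^2 - (π/p)^2) ≤ (π/p - s) * (π^2 - (π/p)^2) := by
      rw [heq]; exact key
    exact le_of_mul_le_mul_right h4 hfac
  have hbase : 1 + a ≤ π / (p * s) := by
    rw [le_div_iff₀ (by positivity)]
    have h5 : p * ((1 + a) * s) ≤ p * (π / p) := by
      apply mul_le_mul_of_nonneg_left _ hp0.le
      nlinarith
    rw [mul_div_cancel₀ _ (ne_of_gt hp0)] at h5
    nlinarith
  -- Bernoulli
  have hbern : 1 + p * a < (1 + a) ^ p :=
    one_add_mul_self_lt_rpow_one_add (by linarith) (ne_of_gt ha) hp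
  have hmono : (1 + a) ^ p ≤ (π / (p * s)) ^ p :=
    Real.rpow_le_rpow (by linarith) hbase hp0.le
  have hfinal : (p - 1) * (1 + p * a) < (p - 1) * (π / (p * s)) ^ p := by
    apply mul_lt_mul_of_pos_left _ (by linarith)
    linarith
  have hlhs : p + π ^ 2 / 6 - 1 - π ^ 2 / (6 * (p + 1)) = (p - 1) * (1 + p * a) := by
    rw [hadef]
    have h1 : p + 1 ≠ 0 := by linarith
    have h2 : p^2 - 1 ≠ 0 := ne_of_gt hp21
    field_simp
    ring
  rw [hlhs]
  exact hfinal
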